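/- Let m, n be positive integers, α, β real with (i,j) ↦ αi + βj injective on the grid {1,…,m} × {1,…,n}, and let V = span{(αx+βy)^k : 0 ≤ k ≤ mn−1}. Define S : V → ℝ^{m×n} by S(P) = (P(i,j))_{i,j}. Then S is a linear bijection, and S is the inverse of the interpolation map T : ℝ^{m×n} → V. -/

import Mathlib

open MvPolynomial

/-- the evaluation map S : V → ℝ^{m×n}, S(P) = (P(i,j))_{i,j}, is a linear
bijection and is the inverse of the interpolation map T. -/
theorem stmt_9 (m n : ℕ) (hm : 0 < m) (hn : 0 < n) (α β : ℝ)
    (hinj : Function.Injective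
      (fun p : Fin m × Fin n => α * ((p.1 : ℕ) + 1) + β * ((p.2 : ℕ) + 1)))
    (V : Submodule ℝ (MvPolynomial (Fin 2) ℝ))
    (hV : V = Submodule.span ℝ
      (Set.range (fun k : Fin (m * n) =>
        (C α * X 0 + C β * X 1 : MvPolynomial (Fin 2) ℝ) ^ (k : ℕ))))
    (S : V → Matrix (Fin m) (Fin n) ℝ)
    (hS : ∀ (P : V) (i : Fin m) (j : Fin n),
      S P i j = eval ![((i : ℕ) + 1 : ℝ), ((j : ℕ) + 1 : ℝ)] (P : MvPolynomial (Fin 2) ℝ)) :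
    IsLinearMap ℝ S ∧ Function.Bijective S ∧
    ∃ T : Matrix (Fin m) (Fin n) ℝ ≃ₗ[ℝ] V,
      (∀ (A : Matrix (Fin m) (Fin n) ℝ) (i : Fin m) (j : Fin n),
        eval ![((i : ℕ) + 1 : ℝ), ((j : ℕ) + 1 : ℝ)] ((T A : MvPolynomial (Fin 2) ℝ)) = A i j) ∧
      (∀ A : Matrix (Fin m) (Fin n) ℝ, S (T A) = A) ∧
      (∀ P : V, T (S P) = P) := by
  classical
  set g : Fin (m * n) → MvPolynomial (Fin 2) ℝ :=
    fun k => (C α * X 0 + C β * X 1) ^ (k : ℕ) with hg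
  -- the evaluation linear map
  let E : MvPolynomial (Fin 2) ℝ →ₗ[ℝ] Matrix (Fin m) (Fin n) ℝ :=
    { toFun := fun p => Matrix.of fun i j => eval ![((i : ℕ) + 1 : ℝ), ((j : ℕ) + 1 : ℝ)] p
      map_add' := by intro p q; ext i j; simp
      map_smul' := by intro c p; ext i j; simp [MvPolynomial.smul_eval] }
  let Sₗ : V →ₗ[ℝ] Matrix (Fin m) (Fin n) ℝ := E ∘ₗ V.subtype
  have hSeq : S = Sₗ := by
    funext P; ext i j; rw [hS]; rfl
  have hevalg : ∀ (k : ℕ) (i : Fin m) (j : Fin n),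
      eval ![((i : ℕ) + 1 : ℝ), ((j : ℕ) + 1 : ℝ)] ((C α * X 0 + C β * X 1 :
        MvPolynomial (Fin 2) ℝ) ^ k)
        = (α * ((i : ℕ) + 1) + β * ((j : ℕ) + 1)) ^ k := by
    intro k i j
    simp
  let e : Fin m × Fin n ≃ Fin (m * n) := finProdFinEquiv
  let d : Fin (m * n) → ℝ := fun k =>
    α * (((e.symm k).1 : ℕ) + 1) + β * (((e.symm k).2 : ℕ) + 1)
  have hd : Function.Injective d := hinj.comp e.symm.injective
  -- the family of matrices
  let b : Fin (m * n) → Matrix (Fin m) (Fin n) ℝ := fun k => E (g k)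
  -- linear equiv Matrix ≃ (Fin (m*n) → ℝ)
  let φ : Matrix (Fin m) (Fin n) ℝ ≃ₗ[ℝ] (Fin (m * n) → ℝ) :=
    { toFun := fun M k => M (e.symm k).1 (e.symm k).2
      invFun := fun f => Matrix.of fun i j => f (e (i, j))
      map_add' := by intro M N; funext k; rfl
      map_smul' := by intro c M; funext k; rfl
      left_inv := by
        intro M; ext i j; simp [Matrix.of_apply]
      right_inv := by
        intro f; funext k; simp [Matrix.of_apply] }
  have hφb : ∀ k, φ (b k) = fun p => d p ^ (k : ℕ) := by
    intro k; funext p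
    show eval _ (g k) = _
    rw [hg, hevalg]
  -- Vandermonde
  have hW : IsUnit (Matrix.vandermonde d) := by
    rw [Matrix.isUnit_iff_isUnit_det, isUnit_iff_ne_zero]
    exact Matrix.det_vandermonde_ne_zero_iff.mpr hd
  have hli' : LinearIndependent ℝ (fun k => (Matrix.vandermonde d).transpose k) :=
    Matrix.linearIndependent_cols_iff_isUnit.mpr hW
  have hli : LinearIndependent ℝ b := by
    apply LinearIndependent.of_comp φ.toLinearMap
    convert hli' using 1
    funext k
    exact hφb k
  have hcard : Fintype.card (Fin (m * n)) = Module.finrank ℝ (Matrix (Fin m) (Fin n) ℝ) := by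
    simp [Module.finrank_matrix]
  haveI : Nonempty (Fin (m * n)) := ⟨⟨0, Nat.mul_pos hm hn⟩⟩
  have hspan : Submodule.span ℝ (Set.range b) = ⊤ :=
    hli.span_eq_top_of_card_eq_finrank hcard
  have hsurj : Function.Surjective Sₗ := by
    rw [← LinearMap.range_eq_top, eq_top_iff, ← hspan]
    refine Submodule.span_le.mpr ?_
    rintro _ ⟨k, rfl⟩
    exact ⟨⟨g k, by rw [hV]; exact Submodule.subset_span ⟨k, rfl⟩⟩, rfl⟩
  haveI : FiniteDimensional ℝ V := by
    rw [hV]; exact FiniteDimensional.span_of_finite ℝ (Set.finite_range _)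
  have hrank : Module.finrank ℝ V = Module.finrank ℝ (Matrix (Fin m) (Fin n) ℝ) := by
    apply le_antisymm
    · rw [hV]
      refine (finrank_span_le_card _).trans ?_
      rw [Set.toFinset_card]
      exact (Fintype.card_range_le g).trans hcard.le
    · calc Module.finrank ℝ (Matrix (Fin m) (Fin n) ℝ)
          = Module.finrank ℝ (LinearMap.range Sₗ) := by
            rw [LinearMap.range_eq_top.mpr hsurj, finrank_top]
        _ ≤ Module.finrank ℝ V := Sₗ.finrank_range_le
  have hinj' : Function.Injective Sₗ :=
    (LinearMap.injective_iff_surjective_of_finrank_eq_finrank hrank).mpr hsurj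
  let equivS : V ≃ₗ[ℝ] Matrix (Fin m) (Fin n) ℝ :=
    LinearEquiv.ofBijective Sₗ ⟨hinj', hsurj⟩
  have hequivS : ∀ P : V, equivS P = Sₗ P := fun _ => rfl
  refine ⟨hSeq ▸ Sₗ.isLinear, hSeq ▸ ⟨hinj', hsurj⟩, equivS.symm, ?_, ?_, ?_⟩
  · intro A i j
    have : S (equivS.symm A) = A := by
      rw [hSeq]
      exact equivS.apply_symm_apply A
    rw [← hS, this]
  · intro A
    rw [hSeq]
    exact equivS.apply_symm_apply A
  · intro P
    rw [hSeq]
    exact equivS.symm_apply_apply P
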